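/- Let T_x be the hitting time of vertex x and T⁺_∅ the first return time to ∅ for a Markov chain started at ∅ on a countable state space. Let T^{(k)}_∅ denote the k-th return time to ∅ (T^{(0)}_∅ = 0). Then for every n ≥ 1, P(T_x ≤ n) ≤ P(T_x < T⁺_∅) · (E(Lₙ(∅)) + 1), where Lₙ(∅) := ∑_{i=1}^n 1{Xᵢ = ∅}. -/

import Mathlib

open MeasureTheory Finset

/-- For a time-homogeneous Markov chain started at the root (formalized as a
Markov measure on path space, with the Markov property at deterministic times),
P(T_x ≤ n) ≤ P(T_x < T⁺_root) · (E(Lₙ(root)) + 1), where T_x is the hitting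
time of x, T⁺_root the first return time to the root, and Lₙ(root) the local
time at the root in the first n steps. -/
theorem hitting_prob_le_excursion_prob_mul_local_time
    {E : Type*} [Countable E] [DecidableEq E] [MeasurableSpace E]
    [MeasurableSingletonClass E]
    (μ : Measure (ℕ → E)) [IsProbabilityMeasure μ]
    (root x : E) (hx : x ≠ root)
    (hstart : μ {ω | ω 0 = root} = 1)
    (hMarkov : ∀ (k : ℕ) (D : Set (Fin (k + 1) → E)) (B : Set (ℕ → E)),
      MeasurableSet B →
      μ ({ω | (fun i : Fin (k + 1) => ω i) ∈ D} ∩ {ω | ω k = root}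
          ∩ {ω | (fun i => ω (i + k)) ∈ B})
        = μ ({ω | (fun i : Fin (k + 1) => ω i) ∈ D} ∩ {ω | ω k = root}) * μ B)
    (n : ℕ) (hn : 1 ≤ n) :
    (μ {ω | ∃ i ≤ n, ω i = x}).toReal
      ≤ (μ {ω | ∃ i, ω i = x ∧ ∀ j, 1 ≤ j → j ≤ i → ω j ≠ root}).toReal
          * ((∫ ω, ((((Finset.Icc 1 n).filter (fun i => ω i = root)).card : ℝ)) ∂μ)
              + 1) := by
  classical
  set A : Set (ℕ → E) := {ω | ∃ i, ω i = x ∧ ∀ j, 1 ≤ j → j ≤ i → ω j ≠ root} with hA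
  have mroot : ∀ k, MeasurableSet {ω : ℕ → E | ω k = root} := fun k => by
    have h : MeasurableSet ((fun ω : ℕ → E => ω k) ⁻¹' {root}) :=
      (measurable_pi_apply k) (measurableSet_singleton root)
    simpa [Set.preimage, Set.mem_singleton_iff] using h
  have mx : ∀ k, MeasurableSet {ω : ℕ → E | ω k = x} := fun k => by
    have h : MeasurableSet ((fun ω : ℕ → E => ω k) ⁻¹' {x}) :=
      (measurable_pi_apply k) (measurableSet_singleton x)
    simpa [Set.preimage, Set.mem_singleton_iff] using h
  have mA : MeasurableSet A := by
    have hAeq : A = ⋃ i, ({ω : ℕ → E | ω i = x} ∩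
        ⋂ j, ⋂ (_ : 1 ≤ j ∧ j ≤ i), {ω : ℕ → E | ω j = root}ᶜ) := by
      ext ω
      simp only [hA, Set.mem_setOf_eq, Set.mem_iUnion, Set.mem_inter_iff,
        Set.mem_iInter, Set.mem_compl_iff, and_imp]
    rw [hAeq]
    exact MeasurableSet.iUnion fun i => (mx i).inter
      (MeasurableSet.iInter fun j => MeasurableSet.iInter fun _ => (mroot j).compl)
  set B : ℕ → Set (ℕ → E) := fun k =>
    {ω : ℕ → E | ω k = root} ∩ {ω : ℕ → E | (fun i => ω (i + k)) ∈ A} with hB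
  have hBmeas : ∀ k, μ (B k) = μ {ω : ℕ → E | ω k = root} * μ A := by
    intro k
    have h := hMarkov k Set.univ A mA
    have huniv : {ω : ℕ → E | (fun i : Fin (k + 1) => ω i) ∈ (Set.univ : Set (Fin (k+1) → E))}
        = Set.univ := by ext ω; simp
    rw [huniv, Set.univ_inter] at h
    exact h
  have hincl : {ω : ℕ → E | ∃ i ≤ n, ω i = x} ∩ {ω : ℕ → E | ω 0 = root}
      ⊆ ⋃ k ∈ Finset.range (n + 1), B k := by
    rintro ω ⟨⟨i, hi, hix⟩, h0⟩
    set S : Finset ℕ := (Finset.range (i + 1)).filter (fun j => ω j = root) with hS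
    have h0S : 0 ∈ S := by
      simp only [hS, Finset.mem_filter, Finset.mem_range]
      exact ⟨Nat.succ_pos i, h0⟩
    have hSne : S.Nonempty := ⟨0, h0S⟩
    set k := S.max' hSne with hk
    have hkS : k ∈ S := S.max'_mem hSne
    have hkroot : ω k = root := (Finset.mem_filter.mp hkS).2
    have hki : k ≤ i := Nat.lt_succ_iff.mp (Finset.mem_range.mp (Finset.mem_filter.mp hkS).1)
    refine Set.mem_biUnion (Finset.mem_range.mpr (Nat.lt_succ_of_le (hki.trans hi))) ?_
    refine ⟨hkroot, i - k, ?_, ?_⟩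
    · show ω (i - k + k) = x
      rw [Nat.sub_add_cancel hki]; exact hix
    · intro j hj1 hji hcon
      have hjk : j + k ∈ S := by
        refine Finset.mem_filter.mpr ⟨Finset.mem_range.mpr ?_, hcon⟩
        omega
      have := S.le_max' _ hjk
      omega
  have hstartc : μ ({ω : ℕ → E | ω 0 = root})ᶜ = 0 := by
    rw [prob_compl_eq_zero_iff (mroot 0)]; exact hstart
  have hmain : μ {ω : ℕ → E | ∃ i ≤ n, ω i = x}
      ≤ (∑ k ∈ Finset.range (n + 1), μ {ω : ℕ → E | ω k = root}) * μ A := by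
    calc μ {ω : ℕ → E | ∃ i ≤ n, ω i = x}
        = μ ({ω : ℕ → E | ∃ i ≤ n, ω i = x} ∩ {ω : ℕ → E | ω 0 = root}) :=
          (measure_inter_conull hstartc).symm
      _ ≤ μ (⋃ k ∈ Finset.range (n + 1), B k) := measure_mono hincl
      _ ≤ ∑ k ∈ Finset.range (n + 1), μ (B k) := measure_biUnion_finset_le _ _
      _ = ∑ k ∈ Finset.range (n + 1), μ {ω : ℕ → E | ω k = root} * μ A :=
          Finset.sum_congr rfl fun k _ => hBmeas k
      _ = (∑ k ∈ Finset.range (n + 1), μ {ω : ℕ → E | ω k = root}) * μ A := by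
          rw [Finset.sum_mul]
  -- split the sum
  have hsplit : Finset.range (n + 1) = insert 0 (Finset.Icc 1 n) := by
    ext j; simp [Finset.mem_range, Finset.mem_Icc, Nat.lt_succ_iff]; omega
  -- the integral
  have hint : (∫ ω, ((((Finset.Icc 1 n).filter (fun i => ω i = root)).card : ℝ)) ∂μ)
      = ∑ k ∈ Finset.Icc 1 n, (μ {ω : ℕ → E | ω k = root}).toReal := by
    have hfun : ∀ ω : ℕ → E, ((((Finset.Icc 1 n).filter (fun i => ω i = root)).card : ℝ))
        = ∑ k ∈ Finset.Icc 1 n,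
            Set.indicator {ω' : ℕ → E | ω' k = root} (fun _ => (1:ℝ)) ω := by
      intro ω
      rw [Finset.card_filter]
      push_cast
      refine Finset.sum_congr rfl fun k _ => ?_
      by_cases h : ω k = root <;> simp [Set.indicator_apply, h]
    calc (∫ ω, ((((Finset.Icc 1 n).filter (fun i => ω i = root)).card : ℝ)) ∂μ)
        = ∫ ω, ∑ k ∈ Finset.Icc 1 n,
            Set.indicator {ω' : ℕ → E | ω' k = root} (fun _ => (1:ℝ)) ω ∂μ := by
          exact integral_congr_ae (Filter.Eventually.of_forall hfun)
      _ = ∑ k ∈ Finset.Icc 1 n,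
            ∫ ω, Set.indicator {ω' : ℕ → E | ω' k = root} (fun _ => (1:ℝ)) ω ∂μ := by
          exact integral_finset_sum _ fun k _ => (integrable_const (1:ℝ)).indicator (mroot k)
      _ = ∑ k ∈ Finset.Icc 1 n, (μ {ω : ℕ → E | ω k = root}).toReal := by
          refine Finset.sum_congr rfl fun k _ => ?_
          rw [integral_indicator_const (1:ℝ) (mroot k), smul_eq_mul, mul_one, measureReal_def]
  -- finiteness and toReal
  have hfin : ∀ s : Set (ℕ → E), μ s ≠ ⊤ := fun s => measure_ne_top μ s
  have := ENNReal.toReal_mono ?_ hmain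
  · refine this.trans (le_of_eq ?_)
    rw [ENNReal.toReal_mul, ENNReal.toReal_sum (fun a _ => hfin _), hsplit,
      Finset.sum_insert (by simp)]
    have h0 : (μ {ω : ℕ → E | ω 0 = root}).toReal = 1 := by rw [hstart]; simp
    rw [h0, hint, mul_comm]
    ring
  · exact ENNReal.mul_ne_top (by
      exact (ENNReal.sum_ne_top).mpr fun a _ => hfin _) (hfin _)
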